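/- Let G be a finite group, H ≤ G, g ∈ G, and suppose there exists an irreducible complex character χ of S(g) with ν₂(g,χ) ≠ 0. Then the double coset HgH contains an element g' such that g'² ∈ H and the order of g' is a power of two. -/

import Mathlib

open scoped BigOperators Pointwise Classical
open CategoryTheory

/-- For `H ≤ G` and `g ∈ G`, the stabilizer `S(g) = Stab_H(gH) = H ∩ gHg⁻¹`. -/
def stabCoset {G : Type*} [Group G] (H : Subgroup G) (g : G) : Subgroup G :=
  H ⊓ Subgroup.map (MulAut.conj g).toMonoidHom H

/-- The `m`-th Frobenius–Schur indicator `ν_m(g,χ)` of the simple object of the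
group-theoretical fusion category `C(G,H)` attached to `(g,χ)`:
`ν_m(g,χ) = (1/|S(g)|) Σ_{x ∈ H, (gx)^m ∈ H} conj(χ((gx)^m))`
(recall that for `x ∈ H`, `(gx)^m ∈ H` iff `(gx)^m ∈ S(g)`). -/
noncomputable def nuInd {G : Type*} [Group G] (H : Subgroup G) (g : G) (m : ℕ)
    (χ : ↥(stabCoset H g) → ℂ) : ℂ :=
  (Nat.card ↥(stabCoset H g) : ℂ)⁻¹ *
    ∑ᶠ x : G, if h : x ∈ H ∧ (g * x) ^ m ∈ stabCoset H g
      then (starRingEnd ℂ) (χ ⟨(g * x) ^ m, h.2⟩) else 0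

/-- The classical second Frobenius–Schur indicator `ν₂(θ) = (1/|K|) Σ_{x∈K} θ(x²)`. -/
noncomputable def fsInd {K : Type*} [Group K] (θ : K → ℂ) : ℂ :=
  (Nat.card K : ℂ)⁻¹ * ∑ᶠ x : K, θ (x ^ 2)

/-- If some irreducible complex character `χ` of `S(g)` has `ν₂(g,χ) ≠ 0`, then the double
coset `HgH` contains an element `g'` with `g'² ∈ H` whose order is a power of two. -/
theorem stmt_0 {G : Type} [Group G] [Finite G] (H : Subgroup G) (g : G)
    (h : ∃ V : FDRep ℂ ↥(stabCoset H g), Simple V ∧ nuInd H g 2 V.character ≠ 0) :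
    ∃ g' : G, (∃ a ∈ H, ∃ b ∈ H, g' = a * g * b) ∧ g' ^ 2 ∈ H ∧
      ∃ k : ℕ, orderOf g' = 2 ^ k := by
  obtain ⟨V, _, hν⟩ := h
  have hx : ∃ x : G, x ∈ H ∧ (g * x) ^ 2 ∈ stabCoset H g := by
    by_contra hc
    push_neg at hc
    apply hν
    unfold nuInd
    rw [finsum_eq_zero_of_forall_eq_zero, mul_zero]
    intro x
    rw [dif_neg]
    rintro ⟨h1, h2⟩
    exact hc x h1 h2
  obtain ⟨x, hxH, hsq⟩ := hx
  have hsqH : (g * x) ^ 2 ∈ H := hsq.1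
  set t := g * x with ht
  have hn0 : 0 < orderOf t := orderOf_pos t
  set n := orderOf t with hn
  set m := ordCompl[2] n with hm
  have hmdvd : m ∣ n := Nat.ordCompl_dvd n 2
  have hm0 : 0 < m := Nat.ordCompl_pos 2 hn0.ne'
  have hm2 : ¬ 2 ∣ m := Nat.not_dvd_ordCompl (by norm_num) hn0.ne'
  obtain ⟨j, hj⟩ : ∃ j, m = 2 * j + 1 := by
    rcases Nat.even_or_odd m with he | ho
    · exact absurd he.two_dvd hm2
    · obtain ⟨j, hj⟩ := ho; exact ⟨j, hj⟩
  refine ⟨t ^ m, ⟨1, one_mem _, x * ((g * x) ^ 2) ^ j, mul_mem hxH (pow_mem hsqH j), ?_⟩, ?_, ?_⟩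
  · rw [one_mul, hj]
    rw [pow_succ' t, pow_mul]
    rw [ht]
    group
  · rw [← pow_mul, mul_comm, pow_mul]
    exact pow_mem hsqH m
  · refine ⟨n.factorization 2, ?_⟩
    rw [orderOf_pow, ← hn, Nat.gcd_eq_right hmdvd]
    have := Nat.ordProj_mul_ordCompl_eq_self n 2
    rw [← hm] at this
    exact Nat.div_eq_of_eq_mul_left hm0 this.symm
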